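/- Let d ∈ {2,3} and let S ⊆ ℝ^d be a set whose (d−1)-dimensional Hausdorff measure is positive, μH[d−1](S) > 0. If c ∈ ℝ^d and W is a skew-symmetric d×d real matrix such that c + W·x = 0 for every x ∈ S, then c = 0 and W = 0. (This is the core of Proposition 5.1: the linear system c + Wx = 0 on a boundary portion of positive surface measure has only the trivial solution.) -/

import Mathlib

open MeasureTheory
open scoped ENNReal NNReal

/-- Core of Proposition 5.1: if a rigid body motion `x ↦ c + W·x` (with `W`
skew-symmetric) vanishes on a set `S ⊆ ℝ^d` (`d ∈ {2,3}`) of positive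
`(d-1)`-dimensional Hausdorff measure, then `c = 0` and `W = 0`. -/
theorem rigid_motion_vanishing_on_positive_surface_measure_set
    (d : ℕ) (hd : d = 2 ∨ d = 3)
    (S : Set (EuclideanSpace ℝ (Fin d)))
    (hS : 0 < μH[(d : ℝ) - 1] S)
    (c : EuclideanSpace ℝ (Fin d)) (W : Matrix (Fin d) (Fin d) ℝ)
    (hW : W.transpose = -W)
    (h : ∀ x ∈ S, c + Matrix.toEuclideanLin W x = 0) :
    c = 0 ∧ W = 0 := by
  obtain ⟨x₀, hx₀⟩ : S.Nonempty := nonempty_of_measure_ne_zero hS.ne'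
  set L := Matrix.toEuclideanLin W with hL
  have hW0 : W = 0 := by
    by_contra hW0
    obtain ⟨i, j, hij⟩ : ∃ i j, W i j ≠ 0 := by
      by_contra hcon
      push_neg at hcon
      exact hW0 (Matrix.ext fun i j => hcon i j)
    have hskew : ∀ a b, W b a = - W a b := fun a b => by
      simpa [Matrix.transpose_apply, Matrix.neg_apply] using congrFun (congrFun hW a) b
    have hdiag : ∀ a, W a a = 0 := fun a => by
      have := hskew a a; linarith
    -- the columns `i` and `j` of `W` are linearly independent elements of the range of `L`
    have hv : ∀ k m, L (EuclideanSpace.single k (1:ℝ)) m = W m k := by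
      intro k m
      simp [hL, Matrix.toEuclideanLin_apply, EuclideanSpace.ofLp_single, Matrix.mulVec_single]
    set v₁ := L (EuclideanSpace.single i (1:ℝ)) with hv₁
    set v₂ := L (EuclideanSpace.single j (1:ℝ)) with hv₂
    have hind : LinearIndependent ℝ ![v₁, v₂] := by
      rw [LinearIndependent.pair_iff]
      intro s t hst
      have hsti : s • v₁ + t • v₂ = 0 := hst
      have hati : (s • v₁ + t • v₂) i = 0 := by rw [hsti]; rfl
      have hatj : (s • v₁ + t • v₂) j = 0 := by rw [hsti]; rfl
      have e1 : s * W i i + t * W i j = 0 := by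
        simpa [hv₁, hv₂, hv] using hati
      have e2 : s * W j i + t * W j j = 0 := by
        simpa [hv₁, hv₂, hv] using hatj
      rw [hdiag i] at e1
      rw [hdiag j, hskew i j] at e2
      constructor
      · have : s * W i j = 0 := by linarith
        rcases mul_eq_zero.1 this with hs | hw
        · exact hs
        · exact absurd hw hij
      · have : t * W i j = 0 := by linarith
        rcases mul_eq_zero.1 this with ht | hw
        · exact ht
        · exact absurd hw hij
    have hrange2 : 2 ≤ Module.finrank ℝ (LinearMap.range L) := by
      have hspan : Submodule.span ℝ (Set.range ![v₁, v₂]) ≤ LinearMap.range L := by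
        rw [Submodule.span_le]
        rintro x ⟨k, rfl⟩
        fin_cases k
        · exact ⟨_, rfl⟩
        · exact ⟨_, rfl⟩
      have hcard := finrank_span_eq_card hind
      simp only [Fintype.card_fin] at hcard
      calc (2:ℕ) = Module.finrank ℝ (Submodule.span ℝ (Set.range ![v₁, v₂])) := hcard.symm
        _ ≤ Module.finrank ℝ (LinearMap.range L) := Submodule.finrank_mono hspan
    have hE : Module.finrank ℝ (EuclideanSpace ℝ (Fin d)) = d := by
      simp [finrank_euclideanSpace]
    have hker : Module.finrank ℝ (LinearMap.ker L) ≤ d - 2 := by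
      have hrn := LinearMap.finrank_range_add_finrank_ker L
      rw [hE] at hrn
      omega
    -- `S` lies in a translate of the kernel of `L`
    set g : LinearMap.ker L → EuclideanSpace ℝ (Fin d) := fun y => x₀ + (y : EuclideanSpace ℝ (Fin d)) with hg
    have hglip : LipschitzWith 1 g := by
      apply LipschitzWith.of_dist_le_mul
      intro a b
      simp [hg, dist_eq_norm, Subtype.dist_eq]
    have hsub : S ⊆ g '' Set.univ := by
      intro x hx
      have h1 := h x hx
      have h2 := h x₀ hx₀
      have hxk : x - x₀ ∈ LinearMap.ker L := by
        rw [LinearMap.mem_ker, map_sub]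
        have : L x = -c := by
          have := h1; linear_combination (norm := module) this
        have h2' : L x₀ = -c := by
          have := h2; linear_combination (norm := module) this
        rw [this, h2', sub_self]
      exact ⟨⟨x - x₀, hxk⟩, Set.mem_univ _, by simp [hg]⟩
    have hdim : dimH S ≤ (Module.finrank ℝ (LinearMap.ker L) : ℝ≥0∞) :=
      calc dimH S ≤ dimH (g '' Set.univ) := dimH_mono hsub
        _ ≤ dimH (Set.univ : Set (LinearMap.ker L)) := hglip.dimH_image_le _
        _ = Module.finrank ℝ (LinearMap.ker L) := Real.dimH_univ_eq_finrank _
    have hzero : μH[(d : ℝ) - 1] S = 0 := by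
      rcases hd with rfl | rfl
      · have hlt : dimH S < ((1 : ℝ≥0) : ℝ≥0∞) := by
          refine lt_of_le_of_lt hdim ?_
          have : Module.finrank ℝ (LinearMap.ker L) = 0 := by omega
          rw [this]; norm_num
        rw [show ((2:ℕ):ℝ) - 1 = ((1:ℝ≥0):ℝ) by norm_num]
        exact hausdorffMeasure_of_dimH_lt hlt
      · have hlt : dimH S < ((2 : ℝ≥0) : ℝ≥0∞) := by
          refine lt_of_le_of_lt hdim ?_
          have h1 : Module.finrank ℝ (LinearMap.ker L) ≤ 1 := by omega
          calc (Module.finrank ℝ (LinearMap.ker L) : ℝ≥0∞) ≤ (1 : ℕ) := by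
                exact_mod_cast Nat.cast_le.2 h1
            _ < ((2 : ℝ≥0) : ℝ≥0∞) := by norm_num
        rw [show ((3:ℕ):ℝ) - 1 = ((2:ℝ≥0):ℝ) by norm_num]
        exact hausdorffMeasure_of_dimH_lt hlt
    exact absurd hzero hS.ne'
  refine ⟨?_, hW0⟩
  have h1 := h x₀ hx₀
  rw [hL, hW0] at h1
  simpa [Matrix.toEuclideanLin_apply, Matrix.zero_mulVec] using h1
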